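/- Let E be a real inner product space and let N ≥ M ≥ 3 be integers. Suppose c is a real number such that F_M(q) ≤ c for every M-tuple q of pairwise distinct points of E. Then for every N-tuple p of pairwise distinct points of E, F_N(p) ≤ [N(N−1)(N−2) / (M(M−1)(M−2))] · c. -/

import Mathlib

open scoped RealInnerProductSpace
open Finset

/-- The angular function `F_N`: the sum, over all triples consisting of a vertex index
`i` and an unordered pair `{j, k}` of indices distinct from `i` and from each other, of
the cosine of the angle at `p i` between `p j` and `p k`. -/
noncomputable def angularF {E : Type*} [NormedAddCommGroup E] [InnerProductSpace ℝ E]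
    {N : ℕ} (p : Fin N → E) : ℝ :=
  ∑ i : Fin N, ∑ j ∈ Finset.univ.filter (· ≠ i),
    ∑ k ∈ Finset.univ.filter (fun k => j < k ∧ k ≠ i),
      ⟪p j - p i, p k - p i⟫ / (‖p j - p i‖ * ‖p k - p i‖)

/-- cosine term -/
noncomputable def cosG {E : Type*} [NormedAddCommGroup E] [InnerProductSpace ℝ E]
    {N : ℕ} (p : Fin N → E) (i j k : Fin N) : ℝ :=
  ⟪p j - p i, p k - p i⟫ / (‖p j - p i‖ * ‖p k - p i‖)

/-- triple sum over a finset -/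
noncomputable def FS {E : Type*} [NormedAddCommGroup E] [InnerProductSpace ℝ E]
    {N : ℕ} (p : Fin N → E) (S : Finset (Fin N)) : ℝ :=
  ∑ i ∈ S, ∑ j ∈ S.filter (· ≠ i),
    ∑ k ∈ S.filter (fun k => j < k ∧ k ≠ i), cosG p i j k

lemma angularF_eq_FS_univ {E : Type*} [NormedAddCommGroup E] [InnerProductSpace ℝ E]
    {N : ℕ} (p : Fin N → E) : angularF p = FS p Finset.univ := rfl

lemma FS_eq_indicator {E : Type*} [NormedAddCommGroup E] [InnerProductSpace ℝ E]
    {N : ℕ} (p : Fin N → E) (S : Finset (Fin N)) :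
    FS p S = ∑ i : Fin N, ∑ j : Fin N, ∑ k : Fin N,
      if i ∈ S ∧ j ∈ S ∧ k ∈ S ∧ j ≠ i ∧ j < k ∧ k ≠ i then cosG p i j k else 0 := by
  have h1 : ∀ (q : Fin N → Prop) [DecidablePred q] (f : Fin N → ℝ),
      ∑ x ∈ S.filter q, f x = ∑ x : Fin N, if x ∈ S ∧ q x then f x else 0 := by
    intro q _ f
    rw [← Finset.sum_filter]
    congr 1
    ext x
    simp
  have h0 : ∀ (f : Fin N → ℝ),
      ∑ x ∈ S, f x = ∑ x : Fin N, if x ∈ S then f x else 0 := by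
    intro f
    rw [Finset.sum_ite_mem, Finset.univ_inter]
  have hpull : ∀ (a : Prop) [Decidable a] (f : Fin N → ℝ),
      (if a then ∑ x : Fin N, f x else 0) = ∑ x : Fin N, if a then f x else 0 := by
    intro a _ f; split <;> simp
  rw [FS, h0]
  simp only [h1, hpull]
  refine Finset.sum_congr rfl fun i _ => Finset.sum_congr rfl fun j _ =>
    Finset.sum_congr rfl fun k _ => ?_
  split_ifs <;> tauto

theorem counting {N M : ℕ} (hM : 3 ≤ M) (hMN : M ≤ N) (t : Finset (Fin N)) (ht : t.card = 3) :
    ((Finset.powersetCard M (Finset.univ : Finset (Fin N))).filter (fun S => t ⊆ S)).card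
      = (N - 3).choose (M - 3) := by
  have key : ((Finset.powersetCard M (Finset.univ : Finset (Fin N))).filter (fun S => t ⊆ S)).card
      = (Finset.powersetCard (M - 3) (Finset.univ \ t)).card := by
    refine Finset.card_bij' (fun S _ => S \ t) (fun s _ => s ∪ t) ?_ ?_ ?_ ?_
    · intro S hS
      rw [Finset.mem_filter, Finset.mem_powersetCard] at hS
      obtain ⟨⟨-, hcard⟩, hts⟩ := hS
      rw [Finset.mem_powersetCard]
      exact ⟨Finset.sdiff_subset_sdiff (Finset.subset_univ S) le_rfl,
        by rw [Finset.card_sdiff_of_subset hts, hcard, ht]⟩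
    · intro s hs
      rw [Finset.mem_powersetCard] at hs
      obtain ⟨hsub, hcard⟩ := hs
      obtain ⟨-, hdisj⟩ := Finset.subset_sdiff.mp hsub
      rw [Finset.mem_filter, Finset.mem_powersetCard]
      refine ⟨⟨Finset.subset_univ _, ?_⟩, Finset.subset_union_right⟩
      rw [Finset.card_union_of_disjoint hdisj, hcard, ht]
      omega
    · intro S hS
      rw [Finset.mem_filter] at hS
      exact Finset.sdiff_union_of_subset hS.2
    · intro s hs
      rw [Finset.mem_powersetCard] at hs
      obtain ⟨-, hdisj⟩ := Finset.subset_sdiff.mp hs.1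
      exact Finset.union_sdiff_cancel_right hdisj
  rw [key, Finset.card_powersetCard, Finset.card_sdiff_of_subset (Finset.subset_univ t), ht,
    Finset.card_univ, Fintype.card_fin]

lemma FS_eq_angularF_comp {E : Type*} [NormedAddCommGroup E] [InnerProductSpace ℝ E]
    {N M : ℕ} (p : Fin N → E) (S : Finset (Fin N)) (hS : S.card = M) :
    FS p S = angularF (fun m => p (S.orderEmbOfFin hS m)) := by
  set e := S.orderEmbOfFin hS with he
  have hinj : Function.Injective (fun m => e m) := fun a b h => e.injective h
  have himg : Finset.image (fun m => e m) Finset.univ = S := by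
    ext a
    simp only [Finset.mem_image, Finset.mem_univ, true_and]
    constructor
    · rintro ⟨i, rfl⟩; exact Finset.orderEmbOfFin_mem S hS i
    · intro ha
      have hr := Finset.range_orderEmbOfFin S hS
      have : a ∈ Set.range e := by rw [hr]; exact ha
      exact this
  rw [FS, angularF, ← himg,
    Finset.sum_image (fun x _ y _ h => hinj h)]
  refine Finset.sum_congr rfl fun a _ => ?_
  rw [Finset.filter_image, Finset.sum_image (fun x _ y _ h => hinj h)]
  rw [show (Finset.univ.filter fun j => (fun m => e m) j ≠ e a)
      = Finset.univ.filter (· ≠ a) from by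
    ext x; simp [hinj.ne_iff]]
  refine Finset.sum_congr rfl fun j hj => ?_
  rw [Finset.filter_image, Finset.sum_image (fun x _ y _ h => hinj h)]
  rw [show (Finset.univ.filter fun k => e j < (fun m => e m) k ∧ (fun m => e m) k ≠ e a)
      = Finset.univ.filter (fun k => j < k ∧ k ≠ a) from by
    ext x; simp [hinj.ne_iff, e.lt_iff_lt]]
  rfl

lemma sum_FS_powersetCard {E : Type*} [NormedAddCommGroup E] [InnerProductSpace ℝ E]
    {N M : ℕ} (hM : 3 ≤ M) (hMN : M ≤ N) (p : Fin N → E) :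
    ∑ S ∈ Finset.powersetCard M (Finset.univ : Finset (Fin N)), FS p S
      = ((N - 3).choose (M - 3) : ℝ) * angularF p := by
  set P := Finset.powersetCard M (Finset.univ : Finset (Fin N)) with hP
  have main : ∀ i j k : Fin N,
      (∑ S ∈ P, if i ∈ S ∧ j ∈ S ∧ k ∈ S ∧ j ≠ i ∧ j < k ∧ k ≠ i then cosG p i j k else 0)
      = if j ≠ i ∧ j < k ∧ k ≠ i
          then ((N - 3).choose (M - 3) : ℝ) * cosG p i j k else 0 := by
    intro i j k
    by_cases hC : j ≠ i ∧ j < k ∧ k ≠ i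
    · rw [if_pos hC]
      obtain ⟨h1, h2, h3⟩ := hC
      have ht : ({i, j, k} : Finset (Fin N)).card = 3 := by
        rw [Finset.card_insert_of_notMem (by simp [Ne.symm h1, Ne.symm h3]),
          Finset.card_insert_of_notMem (by simp [ne_of_lt h2]), Finset.card_singleton]
      have hcond : ∀ S : Finset (Fin N),
          (i ∈ S ∧ j ∈ S ∧ k ∈ S ∧ j ≠ i ∧ j < k ∧ k ≠ i)
            ↔ ({i, j, k} : Finset (Fin N)) ⊆ S := by
        intro S
        simp [Finset.insert_subset_iff, h1, h2, h3]
      simp only [hcond]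
      rw [← Finset.sum_filter, Finset.sum_const, counting hM hMN _ ht, nsmul_eq_mul]
    · rw [if_neg hC]
      refine Finset.sum_eq_zero fun S _ => ?_
      rw [if_neg (by tauto)]
  calc ∑ S ∈ P, FS p S
      = ∑ i : Fin N, ∑ j : Fin N, ∑ k : Fin N,
          (if j ≠ i ∧ j < k ∧ k ≠ i
            then ((N - 3).choose (M - 3) : ℝ) * cosG p i j k else 0) := by
        simp only [FS_eq_indicator]
        rw [Finset.sum_comm]
        refine Finset.sum_congr rfl fun i _ => ?_
        rw [Finset.sum_comm]
        refine Finset.sum_congr rfl fun j _ => ?_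
        rw [Finset.sum_comm]
        refine Finset.sum_congr rfl fun k _ => ?_
        exact main i j k
    _ = ((N - 3).choose (M - 3) : ℝ) * angularF p := by
        rw [angularF_eq_FS_univ, FS_eq_indicator]
        simp only [Finset.mem_univ, true_and, Finset.mul_sum, mul_ite, mul_zero]

lemma six_mul_choose_three (n : ℕ) : 6 * n.choose 3 = n * (n - 1) * (n - 2) := by
  have h := Nat.descFactorial_eq_factorial_mul_choose n 3
  calc 6 * n.choose 3 = Nat.factorial 3 * n.choose 3 := by norm_num [Nat.factorial]
    _ = n.descFactorial 3 := h.symm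
    _ = n * (n - 1) * (n - 2) := by
        simp only [Nat.descFactorial_succ, Nat.descFactorial_zero, Nat.sub_zero, Nat.mul_one]
        ring

lemma choose_identity {N M : ℕ} (hM : 3 ≤ M) (hMN : M ≤ N) :
    N.choose M * (M * (M - 1) * (M - 2)) = N * (N - 1) * (N - 2) * (N - 3).choose (M - 3) := by
  have hcm := Nat.choose_mul (n := N) hM
  calc N.choose M * (M * (M - 1) * (M - 2))
      = N.choose M * (6 * M.choose 3) := by rw [six_mul_choose_three]
    _ = 6 * (N.choose M * M.choose 3) := by ring
    _ = 6 * (N.choose 3 * (N - 3).choose (M - 3)) := by rw [hcm]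
    _ = (6 * N.choose 3) * (N - 3).choose (M - 3) := by ring
    _ = _ := by rw [six_mul_choose_three]

/-- If `F_M ≤ c` for every `M`-tuple of pairwise distinct points of
`E`, then every `N`-tuple `p` of pairwise distinct points (`N ≥ M ≥ 3`) satisfies
`F_N(p) ≤ (N(N−1)(N−2)/(M(M−1)(M−2))) · c`. -/
theorem angularF_sup_monotone {E : Type*} [NormedAddCommGroup E] [InnerProductSpace ℝ E]
    {N M : ℕ} (hM : 3 ≤ M) (hMN : M ≤ N) (c : ℝ)
    (hc : ∀ q : Fin M → E, (∀ i j : Fin M, i ≠ j → q i ≠ q j) → angularF q ≤ c)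
    (p : Fin N → E) (hp : ∀ i j : Fin N, i ≠ j → p i ≠ p j) :
    angularF p ≤ ((N : ℝ) * ((N : ℝ) - 1) * ((N : ℝ) - 2))
      / ((M : ℝ) * ((M : ℝ) - 1) * ((M : ℝ) - 2)) * c := by
  set P := Finset.powersetCard M (Finset.univ : Finset (Fin N)) with hPdef
  set A : ℝ := (N.choose M : ℝ) with hA
  set B : ℝ := ((N - 3).choose (M - 3) : ℝ) with hB
  set F : ℝ := angularF p with hF
  set Y : ℝ := (M : ℝ) * ((M : ℝ) - 1) * ((M : ℝ) - 2) with hY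
  set X : ℝ := (N : ℝ) * ((N : ℝ) - 1) * ((N : ℝ) - 2) with hX
  have hFSle : ∀ S ∈ P, FS p S ≤ c := by
    intro S hS
    rw [Finset.mem_powersetCard] at hS
    rw [FS_eq_angularF_comp p S hS.2]
    refine hc _ fun i j hij hpe => ?_
    exact hp _ _ (fun h => hij ((S.orderEmbOfFin hS.2).injective h)) hpe
  have h1 : ∑ S ∈ P, FS p S ≤ A * c := by
    have := Finset.sum_le_card_nsmul P _ c hFSle
    rwa [nsmul_eq_mul, hPdef, Finset.card_powersetCard, Finset.card_univ,
      Fintype.card_fin] at this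
  have h2 : B * F ≤ A * c := by
    rw [hB, hF, ← sum_FS_powersetCard hM hMN p]
    exact h1
  have hBpos : (0 : ℝ) < B := by
    rw [hB]
    exact_mod_cast Nat.choose_pos (Nat.sub_le_sub_right hMN 3)
  have hM3 : (3 : ℝ) ≤ (M : ℝ) := by exact_mod_cast hM
  have hYpos : (0 : ℝ) < Y := by
    rw [hY]
    have h0 : (0 : ℝ) < (M : ℝ) := by linarith
    have ha : (0 : ℝ) < (M : ℝ) - 1 := by linarith
    have hb : (0 : ℝ) < (M : ℝ) - 2 := by linarith
    exact mul_pos (mul_pos h0 ha) hb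
  have hreal : A * Y = X * B := by
    have hnat := choose_identity hM hMN
    have hcast := congrArg (Nat.cast : ℕ → ℝ) hnat
    push_cast [Nat.cast_sub (show 1 ≤ M by omega), Nat.cast_sub (show 2 ≤ M by omega),
      Nat.cast_sub (show 1 ≤ N by omega), Nat.cast_sub (show 2 ≤ N by omega)] at hcast
    rw [hA, hY, hX, hB]
    push_cast
    linarith [hcast]
  rw [div_mul_eq_mul_div, le_div_iff₀ hYpos]
  have h6 : B * (F * Y) ≤ B * (X * c) := by
    calc B * (F * Y) = B * F * Y := by ring
      _ ≤ A * c * Y := by nlinarith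
      _ = B * (X * c) := by linear_combination c * hreal
  exact le_of_mul_le_mul_left h6 hBpos
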